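/- Let P_i and P_j be point clouds in ℝ³, each with at least two points, let R be a linear isometry of ℝ³, and let t ∈ ℝ³. Then the transformation compatibility measure is invariant when the same rigid transformation is applied to both clouds: τ({R·p + t : p ∈ P_i}, {R·p + t : p ∈ P_j}) = τ(P_i, P_j). -/

import Mathlib

noncomputable section
open scoped Classical

/-- A point in ℝ³. -/
abbrev Pt : Type := EuclideanSpace ℝ (Fin 3)

/-- Centroid of a point cloud: C(P) = (1/|P|) · Σ_{p∈P} p. -/
def centroid (P : Finset Pt) : Pt := (P.card : ℝ)⁻¹ • ∑ p ∈ P, p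

/-- X_i = min_{p∈P_i} ‖p − C(P_j)‖² (as an infimum of a finite nonempty set). -/
def minToCentroid (Pi Pj : Finset Pt) : ℝ :=
  sInf {d : ℝ | ∃ p ∈ Pi, d = ‖p - centroid Pj‖ ^ 2}

/-- Inter-cluster distance f(P_i, P_j) = X_i + Y_j. -/
def interDist (Pi Pj : Finset Pt) : ℝ :=
  minToCentroid Pi Pj + minToCentroid Pj Pi

/-- Intra-cluster distance M(P) = min_{p,q∈P, p≠q} ‖p − q‖². -/
def intraDist (P : Finset Pt) : ℝ :=
  sInf {d : ℝ | ∃ p ∈ P, ∃ q ∈ P, p ≠ q ∧ d = ‖p - q‖ ^ 2}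

/-- Intra-cluster difference g(P_i, P_j) = M(P_i) − M(P_j). -/
def intraDiff (Pi Pj : Finset Pt) : ℝ := intraDist Pi - intraDist Pj

/-- Normalization factor n(P_i, P_j) = 1/(|P_i|·|P_j|). -/
def normFactor (Pi Pj : Finset Pt) : ℝ := ((Pi.card : ℝ) * (Pj.card : ℝ))⁻¹

/-- Transformation compatibility measure τ(P_i, P_j) = f·g·n. -/
def tcm (Pi Pj : Finset Pt) : ℝ :=
  interDist Pi Pj * intraDiff Pi Pj * normFactor Pi Pj

lemma rig_inj (R : Pt →ₗᵢ[ℝ] Pt) (t : Pt) :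
    Function.Injective (fun p : Pt => R p + t) := by
  intro a b h
  simpa using R.injective (by simpa using h)

lemma card_img (P : Finset Pt) (R : Pt →ₗᵢ[ℝ] Pt) (t : Pt) :
    (P.image (fun p => R p + t)).card = P.card :=
  Finset.card_image_of_injective _ (rig_inj R t)

lemma centroid_img (P : Finset Pt) (hP : P.Nonempty) (R : Pt →ₗᵢ[ℝ] Pt) (t : Pt) :
    centroid (P.image (fun p => R p + t)) = R (centroid P) + t := by
  have hc : (P.card : ℝ) ≠ 0 := by
    exact_mod_cast Finset.card_ne_zero_of_mem hP.choose_spec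
  rw [centroid, centroid, card_img,
    Finset.sum_image (fun a _ b _ h => rig_inj R t h)]
  rw [Finset.sum_add_distrib, ← map_sum, smul_add, ← map_smul, Finset.sum_const,
    ← Nat.cast_smul_eq_nsmul ℝ, smul_smul, inv_mul_cancel₀ hc, one_smul]

lemma norm_img (R : Pt →ₗᵢ[ℝ] Pt) (t : Pt) (p q : Pt) :
    ‖(R p + t) - (R q + t)‖ = ‖p - q‖ := by
  have : (R p + t) - (R q + t) = R (p - q) := by
    rw [map_sub]; abel
  rw [this, R.norm_map]

lemma minToCentroid_img (Pi Pj : Finset Pt) (hj : Pj.Nonempty)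
    (R : Pt →ₗᵢ[ℝ] Pt) (t : Pt) :
    minToCentroid (Pi.image (fun p => R p + t)) (Pj.image (fun p => R p + t))
      = minToCentroid Pi Pj := by
  unfold minToCentroid
  congr 1
  ext d
  simp only [Set.mem_setOf_eq, Finset.mem_image, centroid_img Pj hj R t]
  constructor
  · rintro ⟨p, ⟨q, hq, rfl⟩, rfl⟩
    exact ⟨q, hq, (norm_img R t q (centroid Pj) ▸ rfl)⟩
  · rintro ⟨p, hp, rfl⟩
    exact ⟨R p + t, ⟨p, hp, rfl⟩, by rw [norm_img]⟩

lemma intraDist_img (P : Finset Pt) (R : Pt →ₗᵢ[ℝ] Pt) (t : Pt) :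
    intraDist (P.image (fun p => R p + t)) = intraDist P := by
  unfold intraDist
  congr 1
  ext d
  simp only [Set.mem_setOf_eq, Finset.mem_image]
  constructor
  · rintro ⟨p, ⟨a, ha, rfl⟩, q, ⟨b, hb, rfl⟩, hne, rfl⟩
    exact ⟨a, ha, b, hb, fun h => hne (by rw [h]), (norm_img R t a b ▸ rfl)⟩
  · rintro ⟨p, hp, q, hq, hne, rfl⟩
    exact ⟨R p + t, ⟨p, hp, rfl⟩, R q + t, ⟨q, hq, rfl⟩,
      fun h => hne (rig_inj R t h), by rw [norm_img]⟩

/-- the transformation compatibility measure is invariant when the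
same rigid transformation is applied to both clouds. -/
theorem tcm_rigid_invariant (Pi Pj : Finset Pt)
    (hi : 2 ≤ Pi.card) (hj : 2 ≤ Pj.card) (R : Pt →ₗᵢ[ℝ] Pt) (t : Pt) :
    tcm (Pi.image (fun p => R p + t)) (Pj.image (fun p => R p + t)) = tcm Pi Pj := by
  have hiN : Pi.Nonempty := Finset.card_pos.mp (by omega)
  have hjN : Pj.Nonempty := Finset.card_pos.mp (by omega)
  unfold tcm interDist intraDiff normFactor
  rw [minToCentroid_img Pi Pj hjN, minToCentroid_img Pj Pi hiN,
    intraDist_img, intraDist_img, card_img, card_img]
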